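/- Let f : ℝ³ → ℝ be a function of class C³ and let X be a preconnected subset of the critical set {x ∈ ℝ³ | df_x = 0} of f (i.e., for all x ∈ X the Fréchet derivative of f at x is the zero map). Then the restriction of f to X is constant: there exists c ∈ ℝ such that f(x) = c for all x ∈ X. -/

import Mathlib

open Set MeasureTheory Metric
open scoped ENNReal NNReal RealInnerProductSpace
noncomputable section
abbrev E3 := EuclideanSpace ℝ (Fin 3)
instance instNACG2 : NormedAddCommGroup (E3 →L[ℝ] E3 →L[ℝ] ℝ) := inferInstance
instance instNS2 : NormedSpace ℝ (E3 →L[ℝ] E3 →L[ℝ] ℝ) := inferInstance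
def cube (δ : ℝ) (k : Fin 3 → ℤ) : Set E3 :=
  {x | ∀ i, (k i : ℝ) * δ ≤ x i ∧ x i < ((k i : ℝ) + 1) * δ}

lemma mem_cube_floor {δ : ℝ} (hδ : 0 < δ) (x : E3) :
    x ∈ cube δ (fun i => ⌊x i / δ⌋) := by
  intro i
  constructor
  · have := Int.floor_le (x i / δ)
    calc (⌊x i / δ⌋ : ℝ) * δ ≤ (x i / δ) * δ := by nlinarith
    _ = x i := by field_simp
  · have := Int.lt_floor_add_one (x i / δ)
    calc x i = (x i / δ) * δ := by field_simp
    _ < ((⌊x i / δ⌋ : ℝ) + 1) * δ := by nlinarith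

lemma cube_subset_union (δ : ℝ) (hδ : 0 < δ) (P : Set E3) :
    P ⊆ ⋃ k ∈ {k : Fin 3 → ℤ | (P ∩ cube δ k).Nonempty}, P ∩ cube δ k := by
  intro x hx
  have hm : x ∈ P ∩ cube δ (fun i => ⌊x i / δ⌋) := ⟨hx, mem_cube_floor hδ x⟩
  exact mem_biUnion ⟨x, hm⟩ hm

lemma norm_le_of_mem_cube {δ : ℝ} (hδ : 0 < δ) {k : Fin 3 → ℤ} {x y : E3}
    (hx : x ∈ cube δ k) (hy : y ∈ cube δ k) : ‖x - y‖ ≤ Real.sqrt 3 * δ := by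
  have h : ∀ i, |x i - y i| ≤ δ := by
    intro i
    have h1 := hx i; have h2 := hy i
    rw [abs_le]; constructor <;> nlinarith [h1.1, h1.2, h2.1, h2.2]
  have : ‖x - y‖ = Real.sqrt (∑ i, ‖x i - y i‖ ^ 2) := by
    rw [EuclideanSpace.norm_eq]
    congr 1
  rw [this]
  have hb : (∑ i : Fin 3, ‖x i - y i‖ ^ 2) ≤ 3 * δ ^ 2 := by
    have : ∀ i : Fin 3, ‖x i - y i‖ ^ 2 ≤ δ ^ 2 := by
      intro i
      have := h i
      have habs : ‖x i - y i‖ = |x i - y i| := Real.norm_eq_abs _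
      rw [habs]
      nlinarith [abs_nonneg (x i - y i)]
    calc (∑ i : Fin 3, ‖x i - y i‖ ^ 2) ≤ ∑ _i : Fin 3, δ ^ 2 :=
          Finset.sum_le_sum fun i _ => this i
    _ = 3 * δ ^ 2 := by simp [Finset.sum_const]
  calc Real.sqrt (∑ i, ‖x i - y i‖ ^ 2) ≤ Real.sqrt (3 * δ ^ 2) := Real.sqrt_le_sqrt hb
  _ = Real.sqrt 3 * δ := by
      rw [Real.sqrt_mul (by norm_num)]
      congr 1
      exact Real.sqrt_sq hδ.le

lemma cube_eq_preimage (δ : ℝ) (k : Fin 3 → ℤ) :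
    cube δ k = ((MeasurableEquiv.toLp 2 (Fin 3 → ℝ)).symm) ⁻¹'
      (Set.univ.pi fun i => Ico ((k i : ℝ) * δ) (((k i : ℝ) + 1) * δ)) := by
  ext x
  simp only [cube, mem_setOf_eq, mem_preimage, mem_pi, mem_univ, forall_true_left, mem_Ico]
  rfl

lemma volume_cube {δ : ℝ} (hδ : 0 < δ) (k : Fin 3 → ℤ) :
    volume (cube δ k) = ENNReal.ofReal δ ^ 3 := by
  rw [cube_eq_preimage,
    (EuclideanSpace.volume_preserving_symm_measurableEquiv_toLp (Fin 3)).measure_preimage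
      (MeasurableSet.univ_pi fun i => measurableSet_Ico).nullMeasurableSet,
    volume_pi_pi]
  simp only [Real.volume_Ico]
  have : ∀ x : Fin 3, ENNReal.ofReal ((↑(k x) + 1) * δ - ↑(k x) * δ) = ENNReal.ofReal δ := by
    intro x; congr 1; ring
  simp only [this, Finset.prod_const, Finset.card_univ, Fintype.card_fin]

lemma measurableSet_cube (δ : ℝ) (k : Fin 3 → ℤ) : MeasurableSet (cube δ k) := by
  rw [cube_eq_preimage]
  exact ((MeasurableEquiv.toLp 2 (Fin 3 → ℝ)).symm).measurable
    (MeasurableSet.univ_pi fun i => measurableSet_Ico)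

lemma cube_disjoint {δ : ℝ} (hδ : 0 < δ) {k k' : Fin 3 → ℤ} (h : k ≠ k') :
    Disjoint (cube δ k) (cube δ k') := by
  rw [Set.disjoint_left]
  rintro x hx hx'
  apply h
  funext i
  have h1 := hx i; have h2 := hx' i
  by_contra hne
  rcases lt_or_gt_of_ne (fun hc : k i = k' i => hne (by rw [hc])) with hlt | hlt
  · have : (k i : ℝ) + 1 ≤ k' i := by exact_mod_cast Int.add_one_le_iff.mpr hlt
    nlinarith [h1.2, h2.1]
  · have : (k' i : ℝ) + 1 ≤ k i := by exact_mod_cast Int.add_one_le_iff.mpr hlt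
    nlinarith [h1.1, h2.2]

lemma abs_coord_le_norm (x : E3) (i : Fin 3) : |x i| ≤ ‖x‖ := by
  have := EuclideanSpace.norm_eq x
  have h1 : |x i| = Real.sqrt (‖x i‖ ^ 2) := by
    rw [Real.sqrt_sq_eq_abs]; simp [Real.norm_eq_abs, abs_abs]
  rw [h1, this]
  apply Real.sqrt_le_sqrt
  exact Finset.single_le_sum (f := fun j => ‖x j‖ ^ 2) (fun j _ => sq_nonneg _)
    (Finset.mem_univ i)

lemma cube_count {δ : ℝ} (hδ : 0 < δ) (A : Set E3) (F : Finset (Fin 3 → ℤ))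
    (hF : ∀ k ∈ F, cube δ k ⊆ A) :
    (F.card : ℝ≥0∞) * ENNReal.ofReal δ ^ 3 ≤ volume A := by
  have hdisj : (F : Set (Fin 3 → ℤ)).PairwiseDisjoint (cube δ) := by
    intro k _ k' _ hkk'
    exact cube_disjoint hδ hkk'
  have := measure_biUnion_finset (μ := volume) hdisj (fun k _ => measurableSet_cube δ k)
  calc (F.card : ℝ≥0∞) * ENNReal.ofReal δ ^ 3
      = ∑ k ∈ F, volume (cube δ k) := by
        rw [Finset.sum_congr rfl fun k _ => volume_cube hδ k, Finset.sum_const, nsmul_eq_mul]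
    _ = volume (⋃ k ∈ F, cube δ k) := this.symm
    _ ≤ volume A := measure_mono (by
        apply Set.iUnion₂_subset
        intro k hk
        exact hF k hk)

lemma kset_finite {δ : ℝ} (hδ : 0 < δ) {P : Set E3} {x₀ : E3} {R : ℝ}
    (hP : P ⊆ closedBall x₀ R) :
    {k : Fin 3 → ℤ | (P ∩ cube δ k).Nonempty}.Finite := by
  set R' := R + ‖x₀‖ with hR'
  have key : {k : Fin 3 → ℤ | (P ∩ cube δ k).Nonempty} ⊆
      Set.univ.pi fun _ : Fin 3 => {m : ℤ | (m : ℝ) ∈ Set.Icc (-(R'/δ) - 1) (R'/δ + 1)} := by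
    rintro k ⟨x, hxP, hxc⟩
    intro i _
    have hxn : ‖x‖ ≤ R' := by
      have := mem_closedBall_iff_norm.mp (hP hxP)
      calc ‖x‖ = ‖x - x₀ + x₀‖ := by rw [sub_add_cancel]
      _ ≤ ‖x - x₀‖ + ‖x₀‖ := norm_add_le _ _
      _ ≤ R + ‖x₀‖ := by linarith
    have hxi : |x i| ≤ R' := le_trans (abs_coord_le_norm x i) hxn
    have h1 := (hxc i).1
    have h2 := (hxc i).2
    rw [abs_le] at hxi
    constructor
    · have : (-R')/δ ≤ (k i : ℝ) + 1 := by
        rw [div_le_iff₀ hδ]; nlinarith [hxi.1]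
      rw [neg_div] at this
      linarith
    · have : (k i : ℝ) ≤ R'/δ := by
        rw [le_div_iff₀ hδ]; nlinarith [hxi.2]
      linarith
  apply Set.Finite.subset _ key
  apply Set.Finite.pi
  intro i
  have : {m : ℤ | (m : ℝ) ∈ Set.Icc (-(R'/δ) - 1) (R'/δ + 1)} ⊆
      Set.Icc ⌈-(R'/δ) - 1⌉ ⌊R'/δ + 1⌋ := by
    rintro m ⟨h1, h2⟩
    exact ⟨Int.ceil_le.mpr h1, Int.le_floor.mpr h2⟩
  exact (Set.finite_Icc _ _).subset this

lemma volume_image_le_of_dist_le {f : E3 → ℝ} {s : Set E3} {x : E3} {d : ℝ}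
    (hx : x ∈ s) (h : ∀ y ∈ s, |f y - f x| ≤ d) :
    volume (f '' s) ≤ ENNReal.ofReal (2 * d) := by
  have : f '' s ⊆ Set.Icc (f x - d) (f x + d) := by
    rintro _ ⟨y, hy, rfl⟩
    have := h y hy
    rw [abs_le] at this
    exact ⟨by linarith [this.1], by linarith [this.2]⟩
  calc volume (f '' s) ≤ volume (Set.Icc (f x - d) (f x + d)) := measure_mono this
  _ = ENNReal.ofReal (2 * d) := by rw [Real.volume_Icc]; congr 1; ring

/-- Master covering bound. -/
lemma cover_bound (f : E3 → ℝ) {δ : ℝ} (hδ : 0 < δ) (P A : Set E3) (b : ℝ≥0∞)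
    (x₀ : E3) (R : ℝ) (hP : P ⊆ closedBall x₀ R)
    (hA : ∀ k, (P ∩ cube δ k).Nonempty → cube δ k ⊆ A)
    (hb : ∀ k, (P ∩ cube δ k).Nonempty → volume (f '' (P ∩ cube δ k)) ≤ b) :
    volume (f '' P) ≤ (volume A / ENNReal.ofReal δ ^ 3) * b := by
  have hfin := kset_finite hδ hP
  set F := hfin.toFinset with hFdef
  have hmemF : ∀ k, k ∈ F ↔ (P ∩ cube δ k).Nonempty := fun k => hfin.mem_toFinset
  have hcov : f '' P ⊆ ⋃ k ∈ F, f '' (P ∩ cube δ k) := by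
    rintro _ ⟨x, hxP, rfl⟩
    have hm : x ∈ P ∩ cube δ (fun i => ⌊x i / δ⌋) := ⟨hxP, mem_cube_floor hδ x⟩
    exact mem_biUnion ((hmemF _).mpr ⟨x, hm⟩) ⟨x, hm, rfl⟩
  have hcard : (F.card : ℝ≥0∞) ≤ volume A / ENNReal.ofReal δ ^ 3 := by
    rw [ENNReal.le_div_iff_mul_le]
    · exact cube_count hδ A F (fun k hk => hA k ((hmemF k).mp hk))
    · left
      positivity
    · left
      exact ENNReal.pow_ne_top ENNReal.ofReal_ne_top
  calc volume (f '' P) ≤ ∑ k ∈ F, volume (f '' (P ∩ cube δ k)) :=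
        (measure_mono hcov).trans (measure_biUnion_finset_le F _)
  _ ≤ ∑ _k ∈ F, b := Finset.sum_le_sum fun k hk => hb k ((hmemF k).mp hk)
  _ = (F.card : ℝ≥0∞) * b := by rw [Finset.sum_const, nsmul_eq_mul]
  _ ≤ (volume A / ENNReal.ofReal δ ^ 3) * b := mul_le_mul_left hcard b

lemma volume_slab_inter_ball (ℓ : E3 →L[ℝ] ℝ) {c : ℝ} (hc : 0 < c) (hcl : c ≤ ‖ℓ‖)
    (a : ℝ) (x₀ : E3) {r τ : ℝ} (hτ : 0 ≤ τ) (hr : 0 ≤ r) :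
    volume ({y : E3 | |ℓ y - a| ≤ τ} ∩ closedBall x₀ r) ≤
      ENNReal.ofReal (2 * (τ / c)) * ENNReal.ofReal (2 * r) ^ 2 := by
  set v : E3 := (InnerProductSpace.toDual ℝ E3).symm ℓ with hvdef
  have hℓv : ∀ y, ℓ y = ⟪v, y⟫ := fun y => (InnerProductSpace.toDual_symm_apply).symm
  have hnv : ‖v‖ = ‖ℓ‖ := by
    rw [hvdef]; exact LinearIsometryEquiv.norm_map _ ℓ
  have hvpos : 0 < ‖v‖ := by rw [hnv]; linarith
  set u : E3 := ‖v‖⁻¹ • v with hudef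
  have hnu : ‖u‖ = 1 := by
    rw [hudef, norm_smul, norm_inv, norm_norm, inv_mul_cancel₀ (ne_of_gt hvpos)]
  -- orthonormal basis with b 0 = u
  obtain ⟨b, hb⟩ : ∃ b : OrthonormalBasis (Fin 3) ℝ E3, ∀ i ∈ ({0} : Set (Fin 3)),
      b i = (fun _ => u) i := by
    apply Orthonormal.exists_orthonormalBasis_extension_of_card_eq
    · simp [finrank_euclideanSpace]
    · constructor
      · intro i
        simp only [Set.restrict_apply]
        rw [hnu]
      · intro i j hij
        exfalso
        apply hij
        ext
        have hi := i.2; have hj := j.2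
        simp only [Set.mem_singleton_iff] at hi hj
        rw [hi, hj]
  have hb0 : b 0 = u := hb 0 rfl
  set T := b.repr with hT
  set g : Fin 3 → Set ℝ := fun i =>
    if i = 0 then Set.Icc (a / ‖v‖ - τ / c) (a / ‖v‖ + τ / c)
    else Set.Icc ((T x₀) i - r) ((T x₀) i + r) with hg
  set PSet : Set E3 := ((MeasurableEquiv.toLp 2 (Fin 3 → ℝ)).symm) ⁻¹' (Set.univ.pi g)
    with hPSet
  have hmeas : MeasurableSet (Set.univ.pi g) := by
    apply MeasurableSet.univ_pi
    intro i
    rw [hg]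
    by_cases h : i = 0 <;> simp [h, measurableSet_Icc]
  have hmeas' : MeasurableSet PSet :=
    ((MeasurableEquiv.toLp 2 (Fin 3 → ℝ)).symm).measurable hmeas
  have hsub : ({y : E3 | |ℓ y - a| ≤ τ} ∩ closedBall x₀ r) ⊆ T ⁻¹' PSet := by
    rintro y ⟨hy1, hy2⟩
    rw [Set.mem_preimage, hPSet, Set.mem_preimage, Set.mem_univ_pi]
    intro i
    suffices hgoal : T y i ∈ g i by
      exact hgoal
    simp only [hg]
    by_cases h : i = 0
    · rw [if_pos h]
      have hcoord : T y 0 = ⟪u, y⟫ := by rw [hT, ← hb0, OrthonormalBasis.repr_apply_apply]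
      have hy1' : |ℓ y - a| ≤ τ := hy1
      have hly : ℓ y = ‖v‖ * ⟪u, y⟫ := by
        rw [hℓv, hudef, real_inner_smul_left]
        field_simp
        try ring
      have habs : |⟪u, y⟫ - a / ‖v‖| ≤ τ / c := by
        have h1 : |‖v‖ * (⟪u, y⟫ - a / ‖v‖)| ≤ τ := by
          have : ‖v‖ * (⟪u, y⟫ - a / ‖v‖) = ℓ y - a := by
            rw [hly]; field_simp; try ring
          rw [this]; exact hy1'
        rw [abs_mul, abs_of_pos hvpos] at h1
        have h2 : |⟪u, y⟫ - a / ‖v‖| ≤ τ / ‖v‖ := by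
          rw [le_div_iff₀ hvpos]; linarith [h1]
        calc |⟪u, y⟫ - a / ‖v‖| ≤ τ / ‖v‖ := h2
        _ ≤ τ / c := by
            apply div_le_div_of_nonneg_left hτ hc
            rw [hnv]; exact hcl
      rw [h, hcoord]
      rw [abs_le] at habs
      exact ⟨by linarith [habs.1], by linarith [habs.2]⟩
    · rw [if_neg h]
      have : |T y i - T x₀ i| ≤ r := by
        have h1 : T y i - T x₀ i = (T (y - x₀)) i := by
          rw [hT]; simp [map_sub]
        rw [h1]
        calc |(T (y - x₀)) i| ≤ ‖T (y - x₀)‖ := abs_coord_le_norm _ i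
        _ = ‖y - x₀‖ := LinearIsometryEquiv.norm_map _ _
        _ ≤ r := by rwa [mem_closedBall_iff_norm] at hy2
      rw [abs_le] at this
      exact ⟨by linarith [this.1], by linarith [this.2]⟩
  calc volume ({y : E3 | |ℓ y - a| ≤ τ} ∩ closedBall x₀ r)
      ≤ volume (T ⁻¹' PSet) := measure_mono hsub
  _ = volume PSet :=
      b.measurePreserving_repr.measure_preimage hmeas'.nullMeasurableSet
  _ = ∏ i : Fin 3, volume (g i) := by
      rw [hPSet,
        (EuclideanSpace.volume_preserving_symm_measurableEquiv_toLp (Fin 3)).measure_preimage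
          hmeas.nullMeasurableSet,
        volume_pi_pi]
  _ ≤ ENNReal.ofReal (2 * (τ / c)) * ENNReal.ofReal (2 * r) ^ 2 := by
      have h0 : volume (g 0) = ENNReal.ofReal (2 * (τ / c)) := by
        simp only [hg, if_pos rfl, Real.volume_Icc]
        congr 1; ring
      have hi : ∀ i : Fin 3, i ≠ 0 → volume (g i) = ENNReal.ofReal (2 * r) := by
        intro i h
        simp only [hg, if_neg h, Real.volume_Icc]
        congr 1; ring
      rw [Fin.prod_univ_three]
      rw [h0, hi 1 (by decide), hi 2 (by decide), sq, mul_assoc]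

section MVT

variable {G : Type*} [NormedAddCommGroup G] [NormedSpace ℝ G]

lemma mvt_seg {φ : E3 → G} {φ' : E3 → E3 →L[ℝ] G}
    (h : ∀ z, HasFDerivAt φ (φ' z) z) {x y : E3} {C : ℝ}
    (hb : ∀ z ∈ segment ℝ x y, ‖φ' z‖ ≤ C) : ‖φ y - φ x‖ ≤ C * ‖y - x‖ :=
  Convex.norm_image_sub_le_of_norm_hasFDerivWithin_le
    (fun z hz => (h z).hasFDerivWithinAt) hb (convex_segment x y)
    (left_mem_segment ℝ x y) (right_mem_segment ℝ x y)

lemma seg_sub_eq {x y z : E3} (hz : z ∈ segment ℝ x y) :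
    ∃ t : ℝ, 0 ≤ t ∧ t ≤ 1 ∧ z - x = t • (y - x) := by
  obtain ⟨a, b, ha, hb, hab, rfl⟩ := hz
  have haeq : a = 1 - b := by linarith
  subst haeq
  exact ⟨b, hb, by linarith, by module⟩

lemma seg_norm_le {x y z : E3} (hz : z ∈ segment ℝ x y) : ‖z - x‖ ≤ ‖y - x‖ := by
  obtain ⟨t, ht0, ht1, heq⟩ := seg_sub_eq hz
  rw [heq, norm_smul, Real.norm_eq_abs, abs_of_nonneg ht0]
  nlinarith [norm_nonneg (y - x)]

end MVT

section Estimates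

lemma g1_contDiff {f : E3 → ℝ} (hf : ContDiff ℝ 3 f) : ContDiff ℝ 2 (fderiv ℝ f) :=
  hf.fderiv_right (by norm_num)

lemma g2_contDiff {f : E3 → ℝ} (hf : ContDiff ℝ 3 f) :
    ContDiff ℝ 1 (fderiv ℝ (fderiv ℝ f)) :=
  (g1_contDiff hf).fderiv_right (by norm_num)

lemma g3_continuous {f : E3 → ℝ} (hf : ContDiff ℝ 3 f) :
    Continuous (fderiv ℝ (fderiv ℝ (fderiv ℝ f))) :=
  ((g2_contDiff hf).fderiv_right (m := 0) (by norm_num)).continuous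

lemma hasF1 {f : E3 → ℝ} (hf : ContDiff ℝ 3 f) (z : E3) :
    HasFDerivAt f (fderiv ℝ f z) z :=
  ((hf.differentiable (by norm_num)) z).hasFDerivAt

lemma hasF2 {f : E3 → ℝ} (hf : ContDiff ℝ 3 f) (z : E3) :
    HasFDerivAt (fderiv ℝ f) (fderiv ℝ (fderiv ℝ f) z) z :=
  (((g1_contDiff hf).differentiable (by norm_num)) z).hasFDerivAt

lemma hasF3 {f : E3 → ℝ} (hf : ContDiff ℝ 3 f) (z : E3) :
    HasFDerivAt (fderiv ℝ (fderiv ℝ f)) (fderiv ℝ (fderiv ℝ (fderiv ℝ f)) z) z :=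
  (((g2_contDiff hf).differentiable (by norm_num)) z).hasFDerivAt

end Estimates

section Est2

variable {f : E3 → ℝ}

local notation "g1" => fderiv ℝ f
local notation "g2" => fderiv ℝ (fderiv ℝ f)
local notation "g3" => fderiv ℝ (fderiv ℝ (fderiv ℝ f))

lemma hasDaffine2 (x : E3) (w : E3) :
    HasFDerivAt (fun w => (fderiv ℝ (fderiv ℝ f) x) (w - x))
      (fderiv ℝ (fderiv ℝ f) x) w := by
  have h := ((fderiv ℝ (fderiv ℝ f) x).hasFDerivAt (x := w - x)).comp w
    ((hasFDerivAt_id w).sub_const x)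
  simpa [Function.comp_def] using h

lemma hasDaffine3 (x : E3) (w : E3) :
    HasFDerivAt (fun w => (fderiv ℝ (fderiv ℝ (fderiv ℝ f)) x) (w - x))
      (fderiv ℝ (fderiv ℝ (fderiv ℝ f)) x) w := by
  have h := ((fderiv ℝ (fderiv ℝ (fderiv ℝ f)) x).hasFDerivAt (x := w - x)).comp w
    ((hasFDerivAt_id w).sub_const x)
  simpa [Function.comp_def] using h

/-- second-order Taylor bound for `g1` along a segment. -/
lemma taylor1 (hf : ContDiff ℝ 3 f) {x y : E3} {M : ℝ}
    (hM : ∀ z ∈ segment ℝ x y, ‖g3 z‖ ≤ M) :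
    ∀ z ∈ segment ℝ x y,
      ‖g1 z - g1 x - (g2 x) (z - x)‖ ≤ (M * ‖y - x‖) * ‖z - x‖ := by
  intro z hz
  have hsub : segment ℝ x z ⊆ segment ℝ x y :=
    (convex_segment x y).segment_subset (left_mem_segment ℝ x y) hz
  have hφ : ∀ w, HasFDerivAt (fun w => g1 w - (g2 x) (w - x)) (g2 w - g2 x) w :=
    fun w => (hasF2 hf w).sub (hasDaffine2 x w)
  have hbound : ∀ w ∈ segment ℝ x z, ‖g2 w - g2 x‖ ≤ M * ‖y - x‖ := by
    intro w hw
    have hs2 : segment ℝ x w ⊆ segment ℝ x y :=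
      (convex_segment x y).segment_subset (left_mem_segment ℝ x y) (hsub hw)
    have := mvt_seg (hasF3 hf) (x := x) (y := w)
      (C := M) (fun u hu => hM u (hs2 hu))
    calc ‖g2 w - g2 x‖ ≤ M * ‖w - x‖ := this
    _ ≤ M * ‖y - x‖ := by
        have hM0 : 0 ≤ M := le_trans (norm_nonneg _) (hM x (left_mem_segment ℝ x y))
        have := seg_norm_le (hsub hw)
        nlinarith
  have key := mvt_seg hφ (x := x) (y := z) hbound
  have hx0 : (g2 x) (x - x) = 0 := by simp
  have heq : (g1 z - (g2 x) (z - x)) - (g1 x - (g2 x) (x - x))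
      = g1 z - g1 x - (g2 x) (z - x) := by
    rw [hx0]
    abel
  rwa [heq] at key

/-- slab estimate at second order: for critical `x, y`. -/
lemma slab1 (hf : ContDiff ℝ 3 f) {x y : E3} {M : ℝ}
    (hg1x : g1 x = 0) (hg1y : g1 y = 0)
    (hM : ∀ z ∈ segment ℝ x y, ‖g3 z‖ ≤ M) :
    ‖(g2 x) (y - x)‖ ≤ M * ‖y - x‖ ^ 2 := by
  have h := taylor1 hf hM y (right_mem_segment ℝ x y)
  have heq : g1 y - g1 x - (g2 x) (y - x) = -((g2 x) (y - x)) := by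
    rw [hg1x, hg1y]; abel
  rw [heq, norm_neg] at h
  calc ‖(g2 x) (y - x)‖ ≤ M * ‖y - x‖ * ‖y - x‖ := h
  _ = M * ‖y - x‖ ^ 2 := by ring

/-- order-3 bound when `x` is doubly critical (`y` arbitrary). -/
lemma estA (hf : ContDiff ℝ 3 f) {x y : E3} {M : ℝ}
    (hg1x : g1 x = 0) (hg2x : g2 x = 0)
    (hM : ∀ z ∈ segment ℝ x y, ‖g3 z‖ ≤ M) :
    ‖f y - f x‖ ≤ M * ‖y - x‖ ^ 3 := by
  have hM0 : 0 ≤ M := le_trans (norm_nonneg _) (hM x (left_mem_segment ℝ x y))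
  have h2 : ∀ z ∈ segment ℝ x y, ‖g2 z‖ ≤ M * ‖y - x‖ := by
    intro z hz
    have hs2 : segment ℝ x z ⊆ segment ℝ x y :=
      (convex_segment x y).segment_subset (left_mem_segment ℝ x y) hz
    have := mvt_seg (hasF3 hf) (x := x) (y := z) (C := M) (fun u hu => hM u (hs2 hu))
    rw [hg2x, sub_zero] at this
    calc ‖g2 z‖ ≤ M * ‖z - x‖ := this
    _ ≤ M * ‖y - x‖ := by nlinarith [seg_norm_le hz, norm_nonneg (z - x), norm_nonneg (y - x)]
  have h1 : ∀ z ∈ segment ℝ x y, ‖g1 z‖ ≤ (M * ‖y - x‖) * ‖y - x‖ := by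
    intro z hz
    have hs2 : segment ℝ x z ⊆ segment ℝ x y :=
      (convex_segment x y).segment_subset (left_mem_segment ℝ x y) hz
    have := mvt_seg (hasF2 hf) (x := x) (y := z) (C := M * ‖y - x‖)
      (fun u hu => h2 u (hs2 hu))
    rw [hg1x, sub_zero] at this
    calc ‖g1 z‖ ≤ (M * ‖y - x‖) * ‖z - x‖ := this
    _ ≤ (M * ‖y - x‖) * ‖y - x‖ := by
        have h0 : 0 ≤ M * ‖y - x‖ := mul_nonneg hM0 (norm_nonneg _)
        nlinarith [seg_norm_le hz, norm_nonneg (y - x), norm_nonneg (z - x)]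
  have := mvt_seg (hasF1 hf) (x := x) (y := y) h1
  calc ‖f y - f x‖ ≤ ((M * ‖y - x‖) * ‖y - x‖) * ‖y - x‖ := this
  _ = M * ‖y - x‖ ^ 3 := by ring

/-- order-3 bound for a pair of critical points. -/
lemma estB (hf : ContDiff ℝ 3 f) {x y : E3} {M : ℝ}
    (hg1x : g1 x = 0) (hg1y : g1 y = 0)
    (hM : ∀ z ∈ segment ℝ x y, ‖g3 z‖ ≤ M) :
    ‖f y - f x‖ ≤ 2 * M * ‖y - x‖ ^ 3 := by
  have hM0 : 0 ≤ M := le_trans (norm_nonneg _) (hM x (left_mem_segment ℝ x y))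
  have key := slab1 hf hg1x hg1y hM
  have h1 : ∀ z ∈ segment ℝ x y, ‖g1 z‖ ≤ (2 * M * ‖y - x‖ ^ 2) := by
    intro z hz
    obtain ⟨t, ht0, ht1, heq⟩ := seg_sub_eq hz
    have htay := taylor1 hf hM z hz
    rw [hg1x, sub_zero] at htay
    have hsmul : ‖(g2 x) (z - x)‖ ≤ M * ‖y - x‖ ^ 2 := by
      rw [heq, ContinuousLinearMap.map_smul, norm_smul, Real.norm_eq_abs, abs_of_nonneg ht0]
      nlinarith [norm_nonneg ((g2 x) (y - x))]
    calc ‖g1 z‖ = ‖(g1 z - (g2 x) (z - x)) + (g2 x) (z - x)‖ := by congr 1; abel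
    _ ≤ ‖g1 z - (g2 x) (z - x)‖ + ‖(g2 x) (z - x)‖ := norm_add_le _ _
    _ ≤ (M * ‖y - x‖) * ‖z - x‖ + M * ‖y - x‖ ^ 2 := by
        have := seg_norm_le hz
        gcongr <;> nlinarith [htay]
    _ ≤ 2 * M * ‖y - x‖ ^ 2 := by
        have h0 : 0 ≤ M * ‖y - x‖ := mul_nonneg hM0 (norm_nonneg _)
        nlinarith [seg_norm_le hz, norm_nonneg (y - x), norm_nonneg (z - x)]
  have := mvt_seg (hasF1 hf) (x := x) (y := y) h1
  calc ‖f y - f x‖ ≤ (2 * M * ‖y - x‖ ^ 2) * ‖y - x‖ := this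
  _ = 2 * M * ‖y - x‖ ^ 3 := by ring

/-- slab estimate at third order. -/
lemma slab2 (hf : ContDiff ℝ 3 f) {x y : E3} {η : ℝ}
    (hg2x : g2 x = 0) (hg2y : g2 y = 0)
    (hη : ∀ z ∈ segment ℝ x y, ‖g3 z - g3 x‖ ≤ η) :
    ‖(g3 x) (y - x)‖ ≤ η * ‖y - x‖ := by
  have hφ : ∀ w, HasFDerivAt (fun w => g2 w - (g3 x) (w - x)) (g3 w - g3 x) w :=
    fun w => (hasF3 hf w).sub (hasDaffine3 x w)
  have key := mvt_seg hφ (x := x) (y := y) hη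
  have heq : (g2 y - (g3 x) (y - x)) - (g2 x - (g3 x) (x - x)) = -((g3 x) (y - x)) := by
    rw [hg2x, hg2y]
    simp
  rw [heq, norm_neg] at key
  exact key

section Helpers

lemma ennreal_div_mul_le (A q b cc : ℝ≥0∞) (hq0 : q ≠ 0) (hqt : q ≠ ⊤)
    (hb : b ≤ cc * q) : A / q * b ≤ A * cc := by
  calc A / q * b ≤ A / q * (cc * q) := mul_le_mul_right hb _
  _ = A * cc * (q⁻¹ * q) := by rw [div_eq_mul_inv]; ring
  _ = A * cc := by rw [ENNReal.inv_mul_cancel hq0 hqt, mul_one]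

lemma null_of_forall_le {μval : ℝ≥0∞} {C : ℝ≥0∞} (hC : C ≠ ⊤)
    (h : ∀ ε : ℝ, 0 < ε → ε ≤ 1 → μval ≤ C * ENNReal.ofReal ε) : μval = 0 := by
  by_contra hne
  have hpos : 0 < μval := pos_iff_ne_zero.mpr hne
  have hfin : μval ≤ C := by
    have := h 1 one_pos le_rfl
    simpa using this
  by_cases hC0 : C = 0
  · rw [hC0] at hfin
    exact hne (le_antisymm hfin zero_le)
  have hCpos : 0 < C.toReal := ENNReal.toReal_pos hC0 hC
  have hμfin : μval ≠ ⊤ := ne_top_of_le_ne_top hC hfin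
  have hμpos : 0 < μval.toReal := ENNReal.toReal_pos hne hμfin
  set ε := min (μval.toReal / (2 * C.toReal)) 1 with hε
  have hε0 : 0 < ε := lt_min (by positivity) one_pos
  have hε1 : ε ≤ 1 := min_le_right _ _
  have hcon := h ε hε0 hε1
  have hlt : C * ENNReal.ofReal ε < μval := by
    have h1 : C * ENNReal.ofReal ε ≤ C * ENNReal.ofReal (μval.toReal / (2 * C.toReal)) :=
      mul_le_mul_right (ENNReal.ofReal_le_ofReal (min_le_left _ _)) _
    have h2 : C * ENNReal.ofReal (μval.toReal / (2 * C.toReal)) = ENNReal.ofReal (C.toReal * (μval.toReal / (2 * C.toReal))) := by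
      rw [ENNReal.ofReal_mul (le_of_lt hCpos), ENNReal.ofReal_toReal hC]
    have h3 : C.toReal * (μval.toReal / (2 * C.toReal)) = μval.toReal / 2 := by
      field_simp
    have h4 : ENNReal.ofReal (μval.toReal / 2) < μval := by
      conv_rhs => rw [← ENNReal.ofReal_toReal hμfin]
      exact ENNReal.ofReal_lt_ofReal_iff_of_nonneg (by positivity) |>.mpr (by linarith)
    calc C * ENNReal.ofReal ε ≤ ENNReal.ofReal (μval.toReal / 2) := by rw [← h3, ← h2]; exact h1
    _ < μval := h4
  exact absurd hcon (not_le.mpr hlt)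

lemma exists_almost_norm {F : Type*} [NormedAddCommGroup F] [NormedSpace ℝ F]
    (T : E3 →L[ℝ] F) {c : ℝ} (hc : 0 < c) (h : c ≤ ‖T‖) :
    ∃ u : E3, ‖u‖ = 1 ∧ c / 2 ≤ ‖T u‖ := by
  by_contra hcon
  push_neg at hcon
  have hbound : ∀ x : E3, ‖T x‖ ≤ (c / 2) * ‖x‖ := by
    intro x
    rcases eq_or_ne x 0 with rfl | hx
    · simp
    · have hnx : 0 < ‖x‖ := norm_pos_iff.mpr hx
      have hu : ‖(‖x‖⁻¹ • x : E3)‖ = 1 := by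
        rw [norm_smul, norm_inv, norm_norm, inv_mul_cancel₀ (ne_of_gt hnx)]
      have := le_of_lt (hcon _ hu)
      rw [ContinuousLinearMap.map_smul, norm_smul, norm_inv, norm_norm] at this
      calc ‖T x‖ = ‖x‖ * (‖x‖⁻¹ * ‖T x‖) := by field_simp
      _ ≤ ‖x‖ * (c / 2) := by nlinarith
      _ = (c / 2) * ‖x‖ := by ring
  have : ‖T‖ ≤ c / 2 := T.opNorm_le_bound (by positivity) hbound
  linarith

end Helpers

section CoverTools

lemma sqrt3_le_two : Real.sqrt 3 ≤ 2 := by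
  have h4 : Real.sqrt 4 = 2 := by
    rw [show (4:ℝ) = 2^2 by norm_num, Real.sqrt_sq (by norm_num)]
  calc Real.sqrt 3 ≤ Real.sqrt 4 := Real.sqrt_le_sqrt (by norm_num)
  _ = 2 := h4

lemma diam_cube_le {δ : ℝ} (hδ : 0 < δ) {k : Fin 3 → ℤ} {x y : E3}
    (hx : x ∈ cube δ k) (hy : y ∈ cube δ k) : ‖x - y‖ ≤ 2 * δ :=
  (norm_le_of_mem_cube hδ hx hy).trans
    (mul_le_mul_of_nonneg_right sqrt3_le_two hδ.le)

lemma outer_cover (f : E3 → ℝ) {P : Set E3} {n : ℕ} {r : ℝ} (hr : 0 < r) (hr1 : r ≤ 1)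
    (hPK : P ⊆ closedBall (0:E3) (n:ℝ)) {b : ℝ≥0∞}
    (hb : ∀ k, (P ∩ cube (r/2) k).Nonempty → volume (f '' (P ∩ cube (r/2) k)) ≤ b) :
    volume (f '' P) ≤
      volume (closedBall (0:E3) ((n:ℝ)+1)) / ENNReal.ofReal (r/2) ^ 3 * b := by
  have hδ : 0 < r/2 := by linarith
  apply cover_bound f hδ P (closedBall (0:E3) ((n:ℝ)+1)) b 0 (n:ℝ) hPK _ hb
  rintro k ⟨x, hxP, hxc⟩ w hw
  have h1 : ‖w - x‖ ≤ 2 * (r/2) := diam_cube_le hδ hw hxc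
  have h2 : ‖x‖ ≤ (n:ℝ) := by
    have := hPK hxP
    rwa [mem_closedBall_iff_norm, sub_zero] at this
  rw [mem_closedBall_iff_norm, sub_zero]
  calc ‖w‖ = ‖(w - x) + x‖ := by rw [sub_add_cancel]
  _ ≤ ‖w - x‖ + ‖x‖ := norm_add_le _ _
  _ ≤ (n:ℝ) + 1 := by linarith

lemma final_step (A : ℝ≥0∞) {q : ℝ} (hq : 0 < q) {bre Creal ε : ℝ}
    (hnn : 0 ≤ Creal * ε) (hbC : bre ≤ Creal * ε * q ^ 3) :
    A / ENNReal.ofReal q ^ 3 * ENNReal.ofReal bre ≤ A * ENNReal.ofReal (Creal * ε) := by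
  apply ennreal_div_mul_le
  · positivity
  · exact ENNReal.pow_ne_top ENNReal.ofReal_ne_top
  · calc ENNReal.ofReal bre ≤ ENNReal.ofReal (Creal * ε * q ^ 3) := ENNReal.ofReal_le_ofReal hbC
    _ = ENNReal.ofReal (Creal * ε) * ENNReal.ofReal q ^ 3 := by
        rw [ENNReal.ofReal_mul hnn, ENNReal.ofReal_pow hq.le]

lemma inner_cover (f : E3 → ℝ) {P' : Set E3} {x₀ : E3} {r ρ τ c' M J : ℝ}
    (hρ : 0 < ρ) (hρr : ρ ≤ r) (hτ : 0 ≤ τ) (hc' : 0 < c') (hM : 0 ≤ M) (hJ : 0 ≤ J)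
    (hP'x₀ : P' ⊆ closedBall x₀ r)
    (ℓ : E3 →L[ℝ] ℝ) (hℓc : c' ≤ ‖ℓ‖) (hℓM : ‖ℓ‖ ≤ M)
    (hslab : ∀ y ∈ P', |ℓ y - ℓ x₀| ≤ τ)
    (himg : ∀ x₁ ∈ P', ∀ y ∈ P', ‖y - x₁‖ ≤ ρ → |f y - f x₁| ≤ J) :
    volume (f '' P') ≤
      ENNReal.ofReal ((2 * ((τ + M * ρ) / c') * (2 * (2 * r)) ^ 2 / (ρ / 2) ^ 3) * (2 * J)) := by
  have hr : 0 < r := lt_of_lt_of_le hρ hρr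
  have hδ : 0 < ρ/2 := by linarith
  set A : Set E3 := {w : E3 | |ℓ w - ℓ x₀| ≤ τ + M * ρ} ∩ closedBall x₀ (2*r) with hA
  have hAsub : ∀ k, (P' ∩ cube (ρ/2) k).Nonempty → cube (ρ/2) k ⊆ A := by
    rintro k ⟨x₁, hx₁P, hx₁c⟩ w hw
    have hwx₁ : ‖w - x₁‖ ≤ ρ := by
      have := diam_cube_le hδ hw hx₁c
      linarith
    have hx₁b : ‖x₁ - x₀‖ ≤ r := by
      have := hP'x₀ hx₁P
      rwa [mem_closedBall_iff_norm] at this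
    constructor
    · show |ℓ w - ℓ x₀| ≤ τ + M * ρ
      have e1 : ℓ w - ℓ x₀ = (ℓ x₁ - ℓ x₀) + (ℓ w - ℓ x₁) := by ring
      have e2 : |ℓ w - ℓ x₁| ≤ M * ρ := by
        have : ℓ w - ℓ x₁ = ℓ (w - x₁) := by rw [map_sub]
        rw [this]
        calc |ℓ (w - x₁)| ≤ ‖ℓ‖ * ‖w - x₁‖ := ℓ.le_opNorm _
        _ ≤ M * ρ := by
            have h0 : 0 ≤ ‖ℓ‖ := norm_nonneg _
            nlinarith [norm_nonneg (w - x₁)]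
      have e3 : |ℓ x₁ - ℓ x₀| ≤ τ := hslab x₁ hx₁P
      calc |ℓ w - ℓ x₀| ≤ |ℓ x₁ - ℓ x₀| + |ℓ w - ℓ x₁| := by rw [e1]; exact abs_add_le _ _
      _ ≤ τ + M * ρ := by linarith
    · rw [mem_closedBall_iff_norm]
      calc ‖w - x₀‖ = ‖(w - x₁) + (x₁ - x₀)‖ := by rw [sub_add_sub_cancel]
      _ ≤ ‖w - x₁‖ + ‖x₁ - x₀‖ := norm_add_le _ _
      _ ≤ 2 * r := by linarith
  have hbk : ∀ k, (P' ∩ cube (ρ/2) k).Nonempty →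
      volume (f '' (P' ∩ cube (ρ/2) k)) ≤ ENNReal.ofReal (2 * J) := by
    rintro k ⟨x₁, hx₁P, hx₁c⟩
    refine volume_image_le_of_dist_le (s := P' ∩ cube (ρ/2) k) (x := x₁) ⟨hx₁P, hx₁c⟩ ?_
    rintro y ⟨hyP, hyc⟩
    have hd : ‖y - x₁‖ ≤ ρ := by
      have := diam_cube_le hδ hyc hx₁c
      linarith
    exact himg x₁ hx₁P y hyP hd
  have hcov := cover_bound f hδ P' A (ENNReal.ofReal (2*J)) x₀ r hP'x₀ hAsub hbk
  set u : ℝ := 2 * ((τ + M * ρ) / c') with hu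
  set v : ℝ := 2 * (2 * r) with hv
  have hu0 : 0 ≤ u := by
    have : 0 ≤ τ + M * ρ := by nlinarith
    positivity
  have hv0 : 0 ≤ v := by positivity
  have hvolA : volume A ≤ ENNReal.ofReal u * ENNReal.ofReal v ^ 2 :=
    volume_slab_inter_ball ℓ hc' hℓc (ℓ x₀) x₀ (by nlinarith) (by linarith)
  calc volume (f '' P') ≤ volume A / ENNReal.ofReal (ρ/2) ^ 3 * ENNReal.ofReal (2*J) := hcov
  _ ≤ (ENNReal.ofReal u * ENNReal.ofReal v ^ 2) / ENNReal.ofReal (ρ/2) ^ 3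
        * ENNReal.ofReal (2*J) := by gcongr
  _ = ENNReal.ofReal (u * v ^ 2) / ENNReal.ofReal ((ρ/2) ^ 3) * ENNReal.ofReal (2*J) := by
      rw [← ENNReal.ofReal_pow hv0, ← ENNReal.ofReal_mul hu0, ← ENNReal.ofReal_pow hδ.le]
  _ = ENNReal.ofReal (u * v ^ 2 / (ρ/2) ^ 3) * ENNReal.ofReal (2*J) := by
      rw [ENNReal.ofReal_div_of_pos (by positivity)]
  _ = ENNReal.ofReal ((u * v ^ 2 / (ρ/2) ^ 3) * (2 * J)) := by
      rw [← ENNReal.ofReal_mul (by positivity)]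

end CoverTools

section Pieces

variable {f : E3 → ℝ}

lemma bound_M (hf : ContDiff ℝ 3 f) (n : ℕ) :
    ∃ M : ℝ, 1 ≤ M ∧ ∀ z ∈ closedBall (0:E3) (n:ℝ), ‖fderiv ℝ (fderiv ℝ (fderiv ℝ f)) z‖ ≤ M := by
  obtain ⟨C, hC⟩ := (isCompact_closedBall (0:E3) (n:ℝ)).exists_bound_of_continuousOn
    (g3_continuous hf).continuousOn
  exact ⟨max C 1, le_max_right _ _, fun z hz => (hC z hz).trans (le_max_left _ _)⟩

lemma ucont_g3 (hf : ContDiff ℝ 3 f) (n : ℕ) {ε : ℝ} (hε : 0 < ε) :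
    ∃ δ : ℝ, 0 < δ ∧ δ ≤ 1 ∧ ∀ x ∈ closedBall (0:E3) (n:ℝ), ∀ z ∈ closedBall (0:E3) (n:ℝ),
      ‖z - x‖ ≤ δ → ‖fderiv ℝ (fderiv ℝ (fderiv ℝ f)) z - fderiv ℝ (fderiv ℝ (fderiv ℝ f)) x‖ ≤ ε := by
  have h := (isCompact_closedBall (0:E3) (n:ℝ)).uniformContinuousOn_of_continuous
    (g3_continuous hf).continuousOn
  rw [Metric.uniformContinuousOn_iff] at h
  obtain ⟨δ, hδ, hδ'⟩ := h ε hε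
  refine ⟨min (δ/2) 1, by positivity, min_le_right _ _, ?_⟩
  intro x hx z hz hdist
  have hlt : dist z x < δ := by
    rw [dist_eq_norm]
    calc ‖z - x‖ ≤ min (δ/2) 1 := hdist
    _ ≤ δ/2 := min_le_left _ _
    _ < δ := by linarith
  have := hδ' z hz x hx hlt
  rw [dist_eq_norm] at this
  linarith

lemma segment_in_ball {x y : E3} {n : ℝ} (hx : x ∈ closedBall (0:E3) n)
    (hy : y ∈ closedBall (0:E3) n) {z : E3} (hz : z ∈ segment ℝ x y) :
    z ∈ closedBall (0:E3) n :=
  (convex_closedBall _ _).segment_subset hx hy hz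

lemma null_T3 (hf : ContDiff ℝ 3 f) (n : ℕ) {P : Set E3}
    (hPK : P ⊆ closedBall (0:E3) (n:ℝ))
    (hP : ∀ x ∈ P, fderiv ℝ f x = 0 ∧ fderiv ℝ (fderiv ℝ f) x = 0 ∧ fderiv ℝ (fderiv ℝ (fderiv ℝ f)) x = 0) :
    volume (f '' P) = 0 := by
  apply null_of_forall_le
    (C := volume (closedBall (0:E3) ((n:ℝ)+1)) * ENNReal.ofReal 16)
    (ENNReal.mul_ne_top measure_closedBall_lt_top.ne ENNReal.ofReal_ne_top)
  intro ε hε hε1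
  obtain ⟨r, hr, hr1, hu⟩ := ucont_g3 hf n hε
  have hr2 : 0 < r/2 := by linarith
  have hb : ∀ k, (P ∩ cube (r/2) k).Nonempty →
      volume (f '' (P ∩ cube (r/2) k)) ≤ ENNReal.ofReal (2 * (ε * r^3)) := by
    rintro k ⟨x₀, hx₀P, hx₀c⟩
    refine volume_image_le_of_dist_le (x := x₀) ⟨hx₀P, hx₀c⟩ ?_
    rintro y ⟨hyP, hyc⟩
    have hxy : ‖y - x₀‖ ≤ r := by
      have := diam_cube_le hr2 hyc hx₀c
      linarith
    have hseg : ∀ z ∈ segment ℝ x₀ y, ‖fderiv ℝ (fderiv ℝ (fderiv ℝ f)) z‖ ≤ ε := by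
      intro z hz
      have hzK := segment_in_ball (hPK hx₀P) (hPK hyP) hz
      have hzx : ‖z - x₀‖ ≤ r := le_trans (seg_norm_le hz) hxy
      have := hu x₀ (hPK hx₀P) z hzK hzx
      rwa [(hP x₀ hx₀P).2.2, sub_zero] at this
    have hest := estA hf (hP x₀ hx₀P).1 (hP x₀ hx₀P).2.1 hseg
    rw [Real.norm_eq_abs] at hest
    calc |f y - f x₀| ≤ ε * ‖y - x₀‖^3 := hest
    _ ≤ ε * r^3 := by
        have h0 : (0:ℝ) ≤ ‖y - x₀‖ := norm_nonneg _
        exact mul_le_mul_of_nonneg_left (pow_le_pow_left₀ h0 hxy 3) hε.le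
  have houter := outer_cover f hr hr1 hPK hb
  refine le_trans houter ?_
  have hfin := final_step (volume (closedBall (0:E3) ((n:ℝ)+1))) hr2
    (Creal := 16) (ε := ε) (bre := 2 * (ε * r^3)) (by positivity) (by ring_nf; nlinarith)
  refine hfin.trans (le_of_eq ?_)
  rw [ENNReal.ofReal_mul (by norm_num), ← mul_assoc]



lemma bound_M2 (hf : ContDiff ℝ 3 f) (n : ℕ) :
    ∃ M : ℝ, 1 ≤ M ∧ (∀ z ∈ closedBall (0:E3) (n:ℝ), ‖fderiv ℝ (fderiv ℝ (fderiv ℝ f)) z‖ ≤ M)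
      ∧ (∀ z ∈ closedBall (0:E3) (n:ℝ), ‖fderiv ℝ (fderiv ℝ f) z‖ ≤ M) := by
  obtain ⟨C, hC⟩ := (isCompact_closedBall (0:E3) (n:ℝ)).exists_bound_of_continuousOn
    (g3_continuous hf).continuousOn
  obtain ⟨C', hC'⟩ := (isCompact_closedBall (0:E3) (n:ℝ)).exists_bound_of_continuousOn
    ((g2_contDiff hf).continuous).continuousOn
  refine ⟨max (max C C') 1, le_max_right _ _, fun z hz => ?_, fun z hz => ?_⟩
  · exact (hC z hz).trans ((le_max_left _ _).trans (le_max_left _ _))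
  · exact (hC' z hz).trans ((le_max_right _ _).trans (le_max_left _ _))

lemma null_T2 (hf : ContDiff ℝ 3 f) (n : ℕ) {c : ℝ} (hc : 0 < c) {P : Set E3}
    (hPK : P ⊆ closedBall (0:E3) (n:ℝ))
    (hP1 : ∀ x ∈ P, fderiv ℝ f x = 0)
    (hP2 : ∀ x ∈ P, fderiv ℝ (fderiv ℝ f) x = 0)
    (hP3 : ∀ x ∈ P, c ≤ ‖fderiv ℝ (fderiv ℝ (fderiv ℝ f)) x‖) :
    volume (f '' P) = 0 := by
  obtain ⟨M, hM1, hMb⟩ := bound_M hf n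
  have hM0 : (0:ℝ) ≤ M := by linarith
  apply null_of_forall_le
    (C := volume (closedBall (0:E3) ((n:ℝ)+1)) * ENNReal.ofReal (32768 * M * (1+M) / c))
    (ENNReal.mul_ne_top measure_closedBall_lt_top.ne ENNReal.ofReal_ne_top)
  intro ε hε hε1
  obtain ⟨r, hr, hr1, hu⟩ := ucont_g3 hf n hε
  have hr2 : 0 < r/2 := by linarith
  set ρ : ℝ := ε * r with hρdef
  have hρ : 0 < ρ := by positivity
  have hρr : ρ ≤ r := by nlinarith
  set J : ℝ := M * ρ^3 with hJdef
  have hJ : 0 ≤ J := by positivity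
  set bre : ℝ := (2 * ((ε * r + M * ρ) / (c/8)) * (2 * (2 * r)) ^ 2 / (ρ / 2) ^ 3) * (2 * J)
    with hbre
  have hb : ∀ k, (P ∩ cube (r/2) k).Nonempty →
      volume (f '' (P ∩ cube (r/2) k)) ≤ ENNReal.ofReal bre := by
    rintro k ⟨x₀, hx₀P, hx₀c⟩
    have hx₀K := hPK hx₀P
    have hBM : ‖fderiv ℝ (fderiv ℝ (fderiv ℝ f)) x₀‖ ≤ M := hMb x₀ hx₀K
    obtain ⟨u₁, hu₁, h1⟩ := exists_almost_norm _ hc (hP3 x₀ hx₀P)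
    obtain ⟨u₂, hu₂, h2⟩ := exists_almost_norm _ (by linarith : (0:ℝ) < c/2) h1
    obtain ⟨u₃, hu₃, h3⟩ := exists_almost_norm _ (by linarith : (0:ℝ) < c/2/2) h2
    set ℓ : E3 →L[ℝ] ℝ := (ContinuousLinearMap.apply ℝ ℝ u₃).comp
      ((ContinuousLinearMap.apply ℝ (E3 →L[ℝ] ℝ) u₂).comp
        (fderiv ℝ (fderiv ℝ (fderiv ℝ f)) x₀)) with hℓdef
    have hℓapp : ∀ h : E3, ℓ h = ((fderiv ℝ (fderiv ℝ (fderiv ℝ f)) x₀) h) u₂ u₃ :=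
      fun h => rfl
    have hℓabs : ∀ h : E3, |ℓ h| ≤ ‖(fderiv ℝ (fderiv ℝ (fderiv ℝ f)) x₀) h‖ := by
      intro h
      rw [hℓapp]
      calc |((fderiv ℝ (fderiv ℝ (fderiv ℝ f)) x₀) h) u₂ u₃|
          ≤ ‖((fderiv ℝ (fderiv ℝ (fderiv ℝ f)) x₀) h) u₂‖ * ‖u₃‖ := by
            rw [← Real.norm_eq_abs]
            exact ContinuousLinearMap.le_opNorm _ _
      _ = ‖((fderiv ℝ (fderiv ℝ (fderiv ℝ f)) x₀) h) u₂‖ := by rw [hu₃, mul_one]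
      _ ≤ ‖(fderiv ℝ (fderiv ℝ (fderiv ℝ f)) x₀) h‖ * ‖u₂‖ :=
            ContinuousLinearMap.le_opNorm _ _
      _ = ‖(fderiv ℝ (fderiv ℝ (fderiv ℝ f)) x₀) h‖ := by rw [hu₂, mul_one]
    have hℓc : c/8 ≤ ‖ℓ‖ := by
      have hley : |ℓ u₁| ≤ ‖ℓ‖ := by
        calc |ℓ u₁| ≤ ‖ℓ‖ * ‖u₁‖ := by
              rw [← Real.norm_eq_abs]; exact ContinuousLinearMap.le_opNorm _ _
        _ = ‖ℓ‖ := by rw [hu₁, mul_one]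
      have : c/2/2/2 ≤ ‖(((fderiv ℝ (fderiv ℝ (fderiv ℝ f)) x₀) u₁) u₂) u₃‖ := h3
      rw [Real.norm_eq_abs] at this
      have he : |ℓ u₁| = |(((fderiv ℝ (fderiv ℝ (fderiv ℝ f)) x₀) u₁) u₂) u₃| := by
        rw [hℓapp]
      linarith [he ▸ hley]
    have hℓM : ‖ℓ‖ ≤ M := by
      apply ContinuousLinearMap.opNorm_le_bound _ hM0
      intro h
      rw [Real.norm_eq_abs]
      calc |ℓ h| ≤ ‖(fderiv ℝ (fderiv ℝ (fderiv ℝ f)) x₀) h‖ := hℓabs h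
      _ ≤ ‖fderiv ℝ (fderiv ℝ (fderiv ℝ f)) x₀‖ * ‖h‖ := ContinuousLinearMap.le_opNorm _ _
      _ ≤ M * ‖h‖ := mul_le_mul_of_nonneg_right hBM (norm_nonneg _)
    have hP'ball : P ∩ cube (r/2) k ⊆ closedBall x₀ r := by
      rintro y ⟨hyP, hyc⟩
      rw [mem_closedBall_iff_norm]
      have := diam_cube_le hr2 hyc hx₀c
      linarith
    have hslab : ∀ y ∈ P ∩ cube (r/2) k, |ℓ y - ℓ x₀| ≤ ε * r := by
      rintro y ⟨hyP, hyc⟩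
      have hyball := hP'ball ⟨hyP, hyc⟩
      rw [mem_closedBall_iff_norm] at hyball
      have hη : ∀ z ∈ segment ℝ x₀ y,
          ‖fderiv ℝ (fderiv ℝ (fderiv ℝ f)) z - fderiv ℝ (fderiv ℝ (fderiv ℝ f)) x₀‖ ≤ ε := by
        intro z hz
        have hzK := segment_in_ball (hPK hx₀P) (hPK hyP) hz
        exact hu x₀ hx₀K z hzK (le_trans (seg_norm_le hz) hyball)
      have hs2 := slab2 hf (hP2 x₀ hx₀P) (hP2 y hyP) hη
      have : |ℓ y - ℓ x₀| = |ℓ (y - x₀)| := by rw [map_sub]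
      rw [this]
      calc |ℓ (y - x₀)| ≤ ‖(fderiv ℝ (fderiv ℝ (fderiv ℝ f)) x₀) (y - x₀)‖ := hℓabs _
      _ ≤ ε * ‖y - x₀‖ := hs2
      _ ≤ ε * r := mul_le_mul_of_nonneg_left hyball hε.le
    have himg : ∀ x₁ ∈ P ∩ cube (r/2) k, ∀ y ∈ P ∩ cube (r/2) k,
        ‖y - x₁‖ ≤ ρ → |f y - f x₁| ≤ J := by
      rintro x₁ ⟨hx₁P, _⟩ y ⟨hyP, _⟩ hd
      have hMseg : ∀ z ∈ segment ℝ x₁ y, ‖fderiv ℝ (fderiv ℝ (fderiv ℝ f)) z‖ ≤ M := by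
        intro z hz
        exact hMb z (segment_in_ball (hPK hx₁P) (hPK hyP) hz)
      have hest := estA hf (hP1 x₁ hx₁P) (hP2 x₁ hx₁P) hMseg
      rw [Real.norm_eq_abs] at hest
      calc |f y - f x₁| ≤ M * ‖y - x₁‖^3 := hest
      _ ≤ M * ρ^3 := mul_le_mul_of_nonneg_left (pow_le_pow_left₀ (norm_nonneg _) hd 3) hM0
    exact inner_cover f hρ hρr (by positivity) (by linarith : (0:ℝ) < c/8) hM0 hJ
      hP'ball ℓ hℓc hℓM hslab himg
  have houter := outer_cover f hr hr1 hPK hb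
  refine le_trans houter ?_
  have harith : bre ≤ (32768 * M * (1+M) / c) * ε * (r/2)^3 := by
    rw [hbre, hJdef, hρdef]
    apply le_of_eq
    field_simp
    ring
  have hfin := final_step (volume (closedBall (0:E3) ((n:ℝ)+1))) hr2
    (Creal := 32768 * M * (1+M) / c) (ε := ε) (bre := bre) (by positivity) harith
  refine hfin.trans (le_of_eq ?_)
  rw [ENNReal.ofReal_mul (by positivity), ← mul_assoc]

lemma null_T1 (hf : ContDiff ℝ 3 f) (n : ℕ) {c : ℝ} (hc : 0 < c) {P : Set E3}
    (hPK : P ⊆ closedBall (0:E3) (n:ℝ))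
    (hP1 : ∀ x ∈ P, fderiv ℝ f x = 0)
    (hP2 : ∀ x ∈ P, c ≤ ‖fderiv ℝ (fderiv ℝ f) x‖) :
    volume (f '' P) = 0 := by
  obtain ⟨M, hM1, hMb3, hMb2⟩ := bound_M2 hf n
  have hM0 : (0:ℝ) ≤ M := by linarith
  apply null_of_forall_le
    (C := volume (closedBall (0:E3) ((n:ℝ)+1)) * ENNReal.ofReal (65536 * M^2 / c))
    (ENNReal.mul_ne_top measure_closedBall_lt_top.ne ENNReal.ofReal_ne_top)
  intro ε hε hε1
  set r : ℝ := ε with hrdef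
  have hr : 0 < r := hε
  have hr1 : r ≤ 1 := hε1
  have hr2 : 0 < r/2 := by linarith
  set ρ : ℝ := r^2 with hρdef
  have hρ : 0 < ρ := by positivity
  have hρr : ρ ≤ r := by nlinarith
  set J : ℝ := 2 * M * ρ^3 with hJdef
  have hJ : 0 ≤ J := by positivity
  set bre : ℝ := (2 * ((M * r^2 + M * ρ) / (c/4)) * (2 * (2 * r)) ^ 2 / (ρ / 2) ^ 3) * (2 * J)
    with hbre
  have hb : ∀ k, (P ∩ cube (r/2) k).Nonempty →
      volume (f '' (P ∩ cube (r/2) k)) ≤ ENNReal.ofReal bre := by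
    rintro k ⟨x₀, hx₀P, hx₀c⟩
    have hx₀K := hPK hx₀P
    have hBM : ‖fderiv ℝ (fderiv ℝ f) x₀‖ ≤ M := hMb2 x₀ hx₀K
    obtain ⟨u₁, hu₁, h1⟩ := exists_almost_norm _ hc (hP2 x₀ hx₀P)
    obtain ⟨u₂, hu₂, h2⟩ := exists_almost_norm _ (by linarith : (0:ℝ) < c/2) h1
    set ℓ : E3 →L[ℝ] ℝ := (ContinuousLinearMap.apply ℝ ℝ u₂).comp
      (fderiv ℝ (fderiv ℝ f) x₀) with hℓdef
    have hℓapp : ∀ h : E3, ℓ h = ((fderiv ℝ (fderiv ℝ f) x₀) h) u₂ := fun h => rfl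
    have hℓabs : ∀ h : E3, |ℓ h| ≤ ‖(fderiv ℝ (fderiv ℝ f) x₀) h‖ := by
      intro h
      rw [hℓapp]
      calc |((fderiv ℝ (fderiv ℝ f) x₀) h) u₂|
          ≤ ‖(fderiv ℝ (fderiv ℝ f) x₀) h‖ * ‖u₂‖ := by
            rw [← Real.norm_eq_abs]
            exact ContinuousLinearMap.le_opNorm _ _
      _ = ‖(fderiv ℝ (fderiv ℝ f) x₀) h‖ := by rw [hu₂, mul_one]
    have hℓc : c/4 ≤ ‖ℓ‖ := by
      have hley : |ℓ u₁| ≤ ‖ℓ‖ := by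
        calc |ℓ u₁| ≤ ‖ℓ‖ * ‖u₁‖ := by
              rw [← Real.norm_eq_abs]; exact ContinuousLinearMap.le_opNorm _ _
        _ = ‖ℓ‖ := by rw [hu₁, mul_one]
      have h2' : c/2/2 ≤ ‖((fderiv ℝ (fderiv ℝ f) x₀) u₁) u₂‖ := h2
      rw [Real.norm_eq_abs] at h2'
      have he : |ℓ u₁| = |((fderiv ℝ (fderiv ℝ f) x₀) u₁) u₂| := by rw [hℓapp]
      linarith [he ▸ hley]
    have hℓM : ‖ℓ‖ ≤ M := by
      apply ContinuousLinearMap.opNorm_le_bound _ hM0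
      intro h
      rw [Real.norm_eq_abs]
      calc |ℓ h| ≤ ‖(fderiv ℝ (fderiv ℝ f) x₀) h‖ := hℓabs h
      _ ≤ ‖fderiv ℝ (fderiv ℝ f) x₀‖ * ‖h‖ := ContinuousLinearMap.le_opNorm _ _
      _ ≤ M * ‖h‖ := mul_le_mul_of_nonneg_right hBM (norm_nonneg _)
    have hP'ball : P ∩ cube (r/2) k ⊆ closedBall x₀ r := by
      rintro y ⟨hyP, hyc⟩
      rw [mem_closedBall_iff_norm]
      have := diam_cube_le hr2 hyc hx₀c
      linarith
    have hslab : ∀ y ∈ P ∩ cube (r/2) k, |ℓ y - ℓ x₀| ≤ M * r^2 := by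
      rintro y ⟨hyP, hyc⟩
      have hyball := hP'ball ⟨hyP, hyc⟩
      rw [mem_closedBall_iff_norm] at hyball
      have hMseg : ∀ z ∈ segment ℝ x₀ y, ‖fderiv ℝ (fderiv ℝ (fderiv ℝ f)) z‖ ≤ M := by
        intro z hz
        exact hMb3 z (segment_in_ball (hPK hx₀P) (hPK hyP) hz)
      have hs1 := slab1 hf (hP1 x₀ hx₀P) (hP1 y hyP) hMseg
      have heq : |ℓ y - ℓ x₀| = |ℓ (y - x₀)| := by rw [map_sub]
      rw [heq]
      calc |ℓ (y - x₀)| ≤ ‖(fderiv ℝ (fderiv ℝ f) x₀) (y - x₀)‖ := hℓabs _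
      _ ≤ M * ‖y - x₀‖^2 := hs1
      _ ≤ M * r^2 := mul_le_mul_of_nonneg_left (pow_le_pow_left₀ (norm_nonneg _) hyball 2) hM0
    have himg : ∀ x₁ ∈ P ∩ cube (r/2) k, ∀ y ∈ P ∩ cube (r/2) k,
        ‖y - x₁‖ ≤ ρ → |f y - f x₁| ≤ J := by
      rintro x₁ ⟨hx₁P, _⟩ y ⟨hyP, _⟩ hd
      have hMseg : ∀ z ∈ segment ℝ x₁ y, ‖fderiv ℝ (fderiv ℝ (fderiv ℝ f)) z‖ ≤ M := by
        intro z hz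
        exact hMb3 z (segment_in_ball (hPK hx₁P) (hPK hyP) hz)
      have hest := estB hf (hP1 x₁ hx₁P) (hP1 y hyP) hMseg
      rw [Real.norm_eq_abs] at hest
      calc |f y - f x₁| ≤ 2 * M * ‖y - x₁‖^3 := hest
      _ ≤ 2 * M * ρ^3 := by
          have := pow_le_pow_left₀ (norm_nonneg (y - x₁)) hd 3
          nlinarith
    exact inner_cover f hρ hρr (by positivity) (by linarith : (0:ℝ) < c/4) hM0 hJ
      hP'ball ℓ hℓc hℓM hslab himg
  have houter := outer_cover f hr hr1 hPK hb
  refine le_trans houter ?_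
  have harith : bre ≤ (65536 * M^2 / c) * ε * (r/2)^3 := by
    rw [hbre, hJdef, hρdef, hrdef]
    apply le_of_eq
    field_simp
    ring
  have hfin := final_step (volume (closedBall (0:E3) ((n:ℝ)+1))) hr2
    (Creal := 65536 * M^2 / c) (ε := ε) (bre := bre) (by positivity) harith
  refine hfin.trans (le_of_eq ?_)
  rw [ENNReal.ofReal_mul (by positivity), ← mul_assoc]

lemma null_ball (hf : ContDiff ℝ 3 f) {X : Set E3}
    (hcrit : ∀ x ∈ X, fderiv ℝ f x = 0) (n : ℕ) :
    volume (f '' (X ∩ closedBall (0:E3) (n:ℝ))) = 0 := by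
  set S := X ∩ closedBall (0:E3) (n:ℝ) with hS
  have hSK : S ⊆ closedBall (0:E3) (n:ℝ) := inter_subset_right
  have hS1 : ∀ x ∈ S, fderiv ℝ f x = 0 := fun x hx => hcrit x hx.1
  set T3 : Set E3 := {x ∈ S | fderiv ℝ (fderiv ℝ f) x = 0 ∧
    fderiv ℝ (fderiv ℝ (fderiv ℝ f)) x = 0} with hT3
  set T2 : ℕ → Set E3 := fun m => {x ∈ S | fderiv ℝ (fderiv ℝ f) x = 0 ∧
    1/((m:ℝ)+1) ≤ ‖fderiv ℝ (fderiv ℝ (fderiv ℝ f)) x‖} with hT2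
  set T1 : ℕ → Set E3 := fun m => {x ∈ S |
    1/((m:ℝ)+1) ≤ ‖fderiv ℝ (fderiv ℝ f) x‖} with hT1
  have hcover : S ⊆ T3 ∪ ((⋃ m, T2 m) ∪ (⋃ m, T1 m)) := by
    intro x hx
    rcases eq_or_ne (fderiv ℝ (fderiv ℝ f) x) 0 with h2 | h2
    · rcases eq_or_ne (fderiv ℝ (fderiv ℝ (fderiv ℝ f)) x) 0 with h3 | h3
      · exact Or.inl ⟨hx, h2, h3⟩
      · have hpos : 0 < ‖fderiv ℝ (fderiv ℝ (fderiv ℝ f)) x‖ := norm_pos_iff.mpr h3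
        obtain ⟨m, hm⟩ := exists_nat_gt (1/‖fderiv ℝ (fderiv ℝ (fderiv ℝ f)) x‖)
        refine Or.inr (Or.inl (mem_iUnion.mpr ⟨m, hx, h2, ?_⟩))
        rw [div_le_iff₀ (by positivity)]
        rw [div_lt_iff₀ hpos] at hm
        nlinarith
    · have hpos : 0 < ‖fderiv ℝ (fderiv ℝ f) x‖ := norm_pos_iff.mpr h2
      obtain ⟨m, hm⟩ := exists_nat_gt (1/‖fderiv ℝ (fderiv ℝ f) x‖)
      refine Or.inr (Or.inr (mem_iUnion.mpr ⟨m, hx, ?_⟩))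
      rw [div_le_iff₀ (by positivity)]
      rw [div_lt_iff₀ hpos] at hm
      nlinarith
  have himg : f '' S ⊆ (f '' T3) ∪ ((⋃ m, f '' T2 m) ∪ (⋃ m, f '' T1 m)) := by
    rintro _ ⟨x, hx, rfl⟩
    rcases hcover hx with h | h | h
    · exact Or.inl ⟨x, h, rfl⟩
    · obtain ⟨m, hm⟩ := mem_iUnion.mp h
      exact Or.inr (Or.inl (mem_iUnion.mpr ⟨m, x, hm, rfl⟩))
    · obtain ⟨m, hm⟩ := mem_iUnion.mp h
      exact Or.inr (Or.inr (mem_iUnion.mpr ⟨m, x, hm, rfl⟩))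
  apply measure_mono_null himg
  have hT3null : volume (f '' T3) = 0 :=
    null_T3 hf n (fun x hx => hSK hx.1)
      (fun x hx => ⟨hS1 x hx.1, hx.2.1, hx.2.2⟩)
  have hT2null : ∀ m : ℕ, volume (f '' T2 m) = 0 := fun m =>
    null_T2 hf n (by positivity : (0:ℝ) < 1/((m:ℝ)+1)) (fun x hx => hSK hx.1)
      (fun x hx => hS1 x hx.1) (fun x hx => hx.2.1) (fun x hx => hx.2.2)
  have hT1null : ∀ m : ℕ, volume (f '' T1 m) = 0 := fun m =>
    null_T1 hf n (by positivity : (0:ℝ) < 1/((m:ℝ)+1)) (fun x hx => hSK hx.1)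
      (fun x hx => hS1 x hx.1) (fun x hx => hx.2)
  rw [measure_union_null_iff]
  refine ⟨hT3null, ?_⟩
  rw [measure_union_null_iff]
  constructor
  · exact measure_iUnion_null_iff.mpr hT2null
  · exact measure_iUnion_null_iff.mpr hT1null

lemma null_image (hf : ContDiff ℝ 3 f) {X : Set E3}
    (hcrit : ∀ x ∈ X, fderiv ℝ f x = 0) :
    volume (f '' X) = 0 := by
  have hsub : f '' X ⊆ ⋃ n : ℕ, f '' (X ∩ closedBall (0:E3) (n:ℝ)) := by
    rintro _ ⟨x, hx, rfl⟩
    obtain ⟨n, hn⟩ := exists_nat_ge ‖x‖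
    refine mem_iUnion.mpr ⟨n, x, ⟨hx, ?_⟩, rfl⟩
    rw [mem_closedBall_iff_norm, sub_zero]
    exact hn
  exact measure_mono_null hsub
    (measure_iUnion_null_iff.mpr fun n => null_ball hf hcrit n)

end Pieces

/-- Lemma 4 of the paper (C³ version): a C³ function on ℝ³ is constant on any
preconnected subset of its critical set. -/
theorem critical_set_constant_C3
    (f : EuclideanSpace ℝ (Fin 3) → ℝ) (hf : ContDiff ℝ 3 f)
    (X : Set (EuclideanSpace ℝ (Fin 3))) (hX : IsPreconnected X)
    (hcrit : ∀ x ∈ X, fderiv ℝ f x = 0) :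
    ∃ c : ℝ, ∀ x ∈ X, f x = c := by
  rcases Set.eq_empty_or_nonempty X with rfl | ⟨x₀, hx₀⟩
  · exact ⟨0, fun x hx => absurd hx (notMem_empty x)⟩
  refine ⟨f x₀, fun x hx => ?_⟩
  have hnull : volume (f '' X) = 0 := null_image hf hcrit
  have hconn : IsPreconnected (f '' X) :=
    hX.image f (hf.continuous.continuousOn)
  have hord : (f '' X).OrdConnected := hconn.ordConnected
  have key : ∀ a b : E3, a ∈ X → b ∈ X → f a ≤ f b → f b ≤ f a := by
    intro a b ha hb hab
    have hIcc : Set.Icc (f a) (f b) ⊆ f '' X :=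
      hord.out (mem_image_of_mem f ha) (mem_image_of_mem f hb)
    have hvol : volume (Set.Icc (f a) (f b)) = 0 :=
      measure_mono_null hIcc hnull
    rw [Real.volume_Icc, ENNReal.ofReal_eq_zero] at hvol
    linarith
  rcases le_total (f x) (f x₀) with h | h
  · exact le_antisymm h (key x x₀ hx hx₀ h)
  · exact le_antisymm (key x₀ x hx₀ hx h) h
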